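/- Let n ∈ ℕ and let q : ℕ → ℍ, with derived polynomials f₁, f₂. Then for every complex number z, the quaternion z.re + z.im·i is a zero of p(x) = ∑_{m=0}^{n} (q m)·x^m if and only if f₁(z) = 0 and f₂(conj z) = 0. -/

import Mathlib

noncomputable section

/-- The quaternion `a + b·i` corresponding to the complex number `z = a + b·I`. -/
def cq (z : ℂ) : Quaternion ℝ := ⟨z.re, z.im, 0, 0⟩

/-- The quaternion imaginary unit `k`. -/
def qk : Quaternion ℝ := ⟨0, 0, 0, 1⟩

/-- Evaluation of the first derived polynomial `f₁(t) = ∑ t₁⁽ᵐ⁾ tᵐ`,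
where `q m = t₁⁽ᵐ⁾ + t₂⁽ᵐ⁾·j` and `t₁⁽ᵐ⁾ = (q m).re + (q m).imI·I`. -/
def f1 (n : ℕ) (q : ℕ → Quaternion ℝ) (z : ℂ) : ℂ :=
  ∑ m ∈ Finset.range (n + 1), (⟨(q m).re, (q m).imI⟩ : ℂ) * z ^ m

/-- Evaluation of the second derived polynomial `f₂(t) = ∑ t₂⁽ᵐ⁾ tᵐ`,
where `t₂⁽ᵐ⁾ = (q m).imJ + (q m).imK·I`. -/
def f2 (n : ℕ) (q : ℕ → Quaternion ℝ) (z : ℂ) : ℂ :=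
  ∑ m ∈ Finset.range (n + 1), (⟨(q m).imJ, (q m).imK⟩ : ℂ) * z ^ m

/-- Evaluation of `f̄₁`, obtained from `f₁` by conjugating each coefficient. -/
def f1b (n : ℕ) (q : ℕ → Quaternion ℝ) (z : ℂ) : ℂ :=
  ∑ m ∈ Finset.range (n + 1), (starRingEnd ℂ) (⟨(q m).re, (q m).imI⟩ : ℂ) * z ^ m

/-- Evaluation of `f̄₂`, obtained from `f₂` by conjugating each coefficient. -/
def f2b (n : ℕ) (q : ℕ → Quaternion ℝ) (z : ℂ) : ℂ :=
  ∑ m ∈ Finset.range (n + 1), (starRingEnd ℂ) (⟨(q m).imJ, (q m).imK⟩ : ℂ) * z ^ m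

/-- Evaluation of the discriminant polynomial `p̃ = f₁·f̄₁ + f₂·f̄₂`. -/
def ptilde (n : ℕ) (q : ℕ → Quaternion ℝ) (z : ℂ) : ℂ :=
  f1 n q z * f1b n q z + f2 n q z * f2b n q z


def qj' : Quaternion ℝ := ⟨0, 0, 1, 0⟩

lemma cq_re (z : ℂ) : (cq z).re = z.re := rfl
lemma cq_imI (z : ℂ) : (cq z).imI = z.im := rfl
lemma cq_imJ (z : ℂ) : (cq z).imJ = 0 := rfl
lemma cq_imK (z : ℂ) : (cq z).imK = 0 := rfl
lemma qj'_re : qj'.re = 0 := rfl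
lemma qj'_imI : qj'.imI = 0 := rfl
lemma qj'_imJ : qj'.imJ = 1 := rfl
lemma qj'_imK : qj'.imK = 0 := rfl

lemma cq_mul (z w : ℂ) : cq (z * w) = cq z * cq w := by
  apply Quaternion.ext <;> simp [cq_re, cq_imI, cq_imJ, cq_imK, Complex.mul_re, Complex.mul_im]

lemma cq_pow (z : ℂ) (m : ℕ) : cq (z ^ m) = cq z ^ m := by
  induction m with
  | zero => apply Quaternion.ext <;> simp [cq_re, cq_imI, cq_imJ, cq_imK] <;> rfl
  | succ k ih => rw [pow_succ, pow_succ, cq_mul, ih]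

lemma cq_decomp (a : Quaternion ℝ) (z : ℂ) :
    a * cq z = cq ((⟨a.re, a.imI⟩ : ℂ) * z) +
      cq ((⟨a.imJ, a.imK⟩ : ℂ) * (starRingEnd ℂ) z) * qj' := by
  apply Quaternion.ext <;> simp [cq_re, cq_imI, cq_imJ, cq_imK, qj'_re, qj'_imI, qj'_imJ, qj'_imK, Complex.mul_re, Complex.mul_im] <;> ring

lemma cq_sum {s : Finset ℕ} {f : ℕ → ℂ} : cq (∑ m ∈ s, f m) = ∑ m ∈ s, cq (f m) := by
  classical
  induction s using Finset.induction with
  | empty => apply Quaternion.ext <;> simp [cq_re, cq_imI, cq_imJ, cq_imK] <;> rfl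
  | insert _ _ h ih =>
    rw [Finset.sum_insert h, Finset.sum_insert h, ← ih]
    apply Quaternion.ext <;> simp [cq_re, cq_imI, cq_imJ, cq_imK]

lemma cq_final (u v : ℂ) : cq u + cq v * qj' = 0 ↔ u = 0 ∧ v = 0 := by
  rw [Quaternion.ext_iff, Complex.ext_iff, Complex.ext_iff]
  simp [cq_re, cq_imI, cq_imJ, cq_imK, qj'_re, qj'_imI, qj'_imJ, qj'_imK]
  tauto

/-- For a complex number `z`, the corresponding quaternion `z.re + z.im·i` is a zero of
the simple quaternionic polynomial `p` iff `f₁(z) = 0` and `f₂(conj z) = 0`. -/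
theorem complex_quaternion_zero_iff
    (n : ℕ) (q : ℕ → Quaternion ℝ) (z : ℂ) :
    ∑ m ∈ Finset.range (n + 1), q m * (cq z) ^ m = 0 ↔
      f1 n q z = 0 ∧ f2 n q ((starRingEnd ℂ) z) = 0 := by
  have key : ∀ m, q m * (cq z) ^ m =
      cq ((⟨(q m).re, (q m).imI⟩ : ℂ) * z ^ m) +
      cq ((⟨(q m).imJ, (q m).imK⟩ : ℂ) * ((starRingEnd ℂ) z) ^ m) * qj' := by
    intro m
    rw [← cq_pow, cq_decomp, map_pow]
  rw [f1, f2, ← cq_final]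
  simp only [key, Finset.sum_add_distrib, ← Finset.sum_mul, ← cq_sum]
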